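/- Radial stability of the upper radial subderivative: Let X be a real normed space, f : X → (-∞,+∞] lower semicontinuous, x̄ ∈ dom f and u ∈ X such that f is radially accessible at x̄ from u. Then there exists a sequence μ_n ↘ 0 such that f(x̄ + μ_n u) → f(x̄) and f^r_+(x̄;u) ≤ liminf_{n→∞} f^r(x̄ + μ_n u; u). -/

import Mathlib

open Filter Topology

open Set

set_option maxHeartbeats 1000000

/-- Lower radial subderivative `f^r(x;u)`. -/
noncomputable def radial {X : Type*} [NormedAddCommGroup X] [NormedSpace ℝ X]
    (f : X → EReal) (x u : X) : EReal :=
  Filter.liminf (fun t : ℝ => ((t⁻¹ : ℝ) : EReal) * (f (x + t • u) - f x)) (𝓝[>] (0:ℝ))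

/-- Upper radial subderivative `f^r_+(x;u)`. -/
noncomputable def radialPlus {X : Type*} [NormedAddCommGroup X] [NormedSpace ℝ X]
    (f : X → EReal) (x u : X) : EReal :=
  Filter.limsup (fun t : ℝ => ((t⁻¹ : ℝ) : EReal) * (f (x + t • u) - f x)) (𝓝[>] (0:ℝ))

lemma lsc_exists_min_Icc {h : ℝ → EReal} (hlsc : LowerSemicontinuous h) {a b : ℝ}
    (hab : a ≤ b) : ∃ x ∈ Icc a b, ∀ y ∈ Icc a b, h x ≤ h y := by
  obtain ⟨v, -, hv_tendsto, hv_mem⟩ :=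
    exists_seq_tendsto_sInf (S := h '' Icc a b) ((nonempty_Icc.2 hab).image h)
      (OrderBot.bddBelow _)
  choose x hx_mem hx_eq using fun n => hv_mem n
  obtain ⟨z, hz_mem, φ, hφ_mono, hφ_tendsto⟩ := isCompact_Icc.tendsto_subseq hx_mem
  refine ⟨z, hz_mem, fun y hy => ?_⟩
  have hle : h z ≤ sInf (h '' Icc a b) := by
    by_contra hlt
    push_neg at hlt
    obtain ⟨w, hw1, hw2⟩ := exists_between hlt
    have h1 : ∀ᶠ k in atTop, w < h (x (φ k)) :=
      hφ_tendsto.eventually (hlsc z w hw2)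
    have h2 : ∀ᶠ k in atTop, h (x (φ k)) < w := by
      have := (hv_tendsto.comp hφ_mono.tendsto_atTop).eventually_lt_const hw1
      simpa only [Function.comp, hx_eq] using this
    obtain ⟨k, hk1, hk2⟩ := (h1.and h2).exists
    exact absurd (hk1.trans hk2) (lt_irrefl _)
  exact hle.trans (csInf_le (OrderBot.bddBelow _) (mem_image_of_mem h hy))

lemma key_step {X : Type*} [NormedAddCommGroup X] [NormedSpace ℝ X]
    (f : X → EReal) (hf : LowerSemicontinuous f) (hbot : ∀ y, f y ≠ ⊥)
    (xbar u : X) {r : ℝ} (hr : f xbar = (r : EReal))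
    (hacc : Filter.liminf (fun t : ℝ => f (xbar + t • u)) (𝓝[>] (0:ℝ)) = f xbar)
    (c : ℝ) (hc : (c : EReal) < radialPlus f xbar u) {ε : ℝ} (hε : 0 < ε) :
    ∃ μ : ℝ, 0 < μ ∧ μ < ε ∧ ((r - ε : ℝ) : EReal) ≤ f (xbar + μ • u) ∧
      f (xbar + μ • u) ≤ ((r + ε : ℝ) : EReal) ∧
      (c : EReal) ≤ radial f (xbar + μ • u) u := by

  -- pick real c'' with c < c'' < radialPlus
  obtain ⟨C, hC1, hC2⟩ := exists_between hc
  set c'' : ℝ := C.toReal with hc''def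
  have hCc : C = (c'' : EReal) := (EReal.coe_toReal (ne_top_of_lt hC2) (ne_bot_of_gt hC1)).symm
  rw [hCc] at hC1 hC2
  have hcc : c < c'' := EReal.coe_lt_coe_iff.1 hC1
  set d : ℝ := c'' - c with hddef
  have hd : 0 < d := sub_pos.2 hcc
  -- lsc lower bound ball
  have hlsc0 : ∀ᶠ y in 𝓝 xbar, ((r - ε : ℝ) : EReal) < f y := by
    apply hf xbar
    rw [hr]
    exact_mod_cast sub_lt_self r hε
  obtain ⟨δ₀, hδ₀pos, hδ₀⟩ := Metric.eventually_nhds_iff.1 hlsc0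
  -- choose t
  set T0 : ℝ := min ε (min (δ₀ / (‖u‖ + 1)) (ε / (4 * (|c''| + 1)))) with hT0def
  have hT0pos : 0 < T0 := by
    have h1 : (0:ℝ) < ‖u‖ + 1 := by positivity
    have h2 : (0:ℝ) < 4 * (|c''| + 1) := by positivity
    exact lt_min hε (lt_min (by positivity) (by positivity))
  have hfreq : ∃ᶠ t in 𝓝[>] (0:ℝ),
      (c'' : EReal) < ((t⁻¹ : ℝ) : EReal) * (f (xbar + t • u) - f xbar) :=
    frequently_lt_of_lt_limsup (by isBoundedDefault) hC2
  have hmem : ∀ᶠ t in 𝓝[>] (0:ℝ), t ∈ Ioo 0 T0 :=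
    eventually_of_mem (Ioo_mem_nhdsGT_of_mem ⟨le_refl (0:ℝ), hT0pos⟩) (fun _ h => h)
  obtain ⟨t, hqt, ht0, htT0⟩ := (hfreq.and_eventually hmem).exists
  have htpos : 0 < t := ht0
  have htε : t < ε := htT0.trans_le (min_le_left _ _)
  have htδ : t * (‖u‖ + 1) < δ₀ := by
    have h1 : t < δ₀ / (‖u‖ + 1) := htT0.trans_le ((min_le_right _ _).trans (min_le_left _ _))
    have h2 : (0:ℝ) < ‖u‖ + 1 := by positivity
    exact (lt_div_iff₀ h2).1 h1
  have htc : t < ε / (4 * (|c''| + 1)) :=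
    htT0.trans_le ((min_le_right _ _).trans (min_le_right _ _))
  have htc' : t * (4 * (|c''| + 1)) < ε := by
    have h2 : (0:ℝ) < 4 * (|c''| + 1) := by positivity
    exact (lt_div_iff₀ h2).1 htc
  -- derive f (xbar + t • u) > r + c''*t
  have hgt : ((r + c'' * t : ℝ) : EReal) < f (xbar + t • u) := by
    rw [hr] at hqt
    rcases eq_or_ne (f (xbar + t • u)) ⊤ with hA | hA
    · rw [hA]; exact EReal.coe_lt_top _
    · set a : ℝ := (f (xbar + t • u)).toReal with hadef
      have hA' : f (xbar + t • u) = ((a : ℝ) : EReal) := (EReal.coe_toReal hA (hbot _)).symm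
      rw [hA'] at hqt ⊢
      rw [show ((a:ℝ) : EReal) - (r : EReal) = ((a - r : ℝ) : EReal) from (EReal.coe_sub a r).symm,
        ← EReal.coe_mul] at hqt
      have := EReal.coe_lt_coe_iff.1 hqt
      have h4 : t⁻¹ * (a - r) * t = a - r := by field_simp
      have h3 : c'' * t < a - r := by
        have h5 := mul_lt_mul_of_pos_right this htpos
        rw [h4] at h5; exact h5
      exact EReal.coe_lt_coe_iff.2 (by linarith)
  -- choose s
  set ε' : ℝ := min (ε / 4) (d * t / 2) with hε'def
  have hε'pos : 0 < ε' := lt_min (by positivity) (by positivity)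
  set S0 : ℝ := min t (d * t / (2 * (|c| + 1))) with hS0def
  have hS0pos : 0 < S0 := lt_min htpos (by positivity)
  have hfreq2 : ∃ᶠ s in 𝓝[>] (0:ℝ), f (xbar + s • u) < ((r + ε' : ℝ) : EReal) := by
    apply frequently_lt_of_liminf_lt (by isBoundedDefault)
    rw [hacc, hr]
    exact_mod_cast lt_add_of_pos_right r hε'pos
  have hmem2 : ∀ᶠ s in 𝓝[>] (0:ℝ), s ∈ Ioo 0 S0 :=
    eventually_of_mem (Ioo_mem_nhdsGT_of_mem ⟨le_refl (0:ℝ), hS0pos⟩) (fun _ h => h)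
  obtain ⟨s, hfs, hs0, hsS0⟩ := (hfreq2.and_eventually hmem2).exists
  have hst : s < t := hsS0.trans_le (min_le_left _ _)
  have hsb : s ≤ d * t / (2 * (|c| + 1)) := (hsS0.trans_le (min_le_right _ _)).le
  have hts : (0:ℝ) < t - s := sub_pos.2 hst
  -- lambda
  set lam : ℝ := c'' * t - ε' with hlamdef
  have hlam_ge : c * (t - s) ≤ lam := by
    have h1 : ε' ≤ d * t / 2 := min_le_right _ _
    have h2 : (0:ℝ) < |c| + 1 := by positivity
    have h3 : c * s ≥ -(|c| + 1) * s := by nlinarith [neg_abs_le c, hs0.le]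
    have h4 : (|c| + 1) * s ≤ d * t / 2 := by
      calc (|c| + 1) * s ≤ (|c| + 1) * (d * t / (2 * (|c| + 1))) := by nlinarith
        _ = d * t / 2 := by field_simp
    simp only [hlamdef, hddef] at *
    nlinarith
  have hlam_abs : |lam| ≤ ε / 2 := by
    have h1 : ε' ≤ ε / 4 := min_le_left _ _
    have h2 : |c''| * t ≤ ε / 4 := by nlinarith [abs_nonneg c'', htpos.le]
    have h3 : -(ε/4) - ε/4 ≤ c'' * t - ε' ∧ c'' * t - ε' ≤ ε/4 + ε/4 := by
      constructor <;> nlinarith [neg_abs_le c'', le_abs_self c'', hε'pos.le]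
    rw [abs_le]
    constructor <;> [linarith [h3.1]; linarith [h3.2]]
  -- the perturbed function and its min
  set g : ℝ → EReal := fun ρ => f (xbar + ρ • u) with hgdef
  set φ : ℝ → ℝ := fun ρ => lam * (s - ρ) / (t - s) with hφdef
  set h : ℝ → EReal := fun ρ => g ρ + ((φ ρ : ℝ) : EReal) with hhdef
  have hgcont : LowerSemicontinuous g :=
    hf.comp (continuous_const.add (continuous_id.smul continuous_const))
  have hφcont : Continuous φ := by
    apply Continuous.div_const
    exact continuous_const.mul (continuous_const.sub continuous_id)
  have hh : LowerSemicontinuous h := by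
    apply hgcont.add' ((continuous_coe_real_ereal.comp hφcont).lowerSemicontinuous)
    intro ρ
    exact EReal.continuousAt_add (Or.inr (EReal.coe_ne_bot _)) (Or.inr (EReal.coe_ne_top _))
  obtain ⟨μ, hμmem, hμmin⟩ := lsc_exists_min_Icc hh hst.le
  have hφs : φ s = 0 := by simp [hφdef]
  have hφt : φ t = -lam := by
    simp only [hφdef]
    field_simp
    ring
  have hhs : h s = g s := by rw [hhdef]; simp [hφs]
  have hμs : h μ ≤ g s := hhs ▸ hμmin s ⟨le_refl s, hst.le⟩
  -- g μ is a real number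
  have hgμtop : g μ ≠ ⊤ := by
    intro htop
    have : h μ = ⊤ := by rw [hhdef]; simp only [htop]; exact EReal.top_add_coe _
    rw [this] at hμs
    exact absurd (hμs.trans_lt hfs) (by simp)
  set m : ℝ := (g μ).toReal with hmdef
  have hm : g μ = (m : EReal) := (EReal.coe_toReal hgμtop (hbot _)).symm
  -- μ < t
  have hμt : μ < t := by
    rcases lt_or_eq_of_le hμmem.2 with h' | h'
    · exact h'
    · exfalso
      have hht : h t = g t + ((-lam : ℝ) : EReal) := by rw [hhdef]; simp [hφt]
      have h1 : ((r + ε' : ℝ) : EReal) < h t := by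
        rw [hht]
        calc ((r + ε' : ℝ) : EReal) = ((r + c'' * t : ℝ) : EReal) + ((-lam : ℝ) : EReal) := by
              rw [← EReal.coe_add, show r + c'' * t + -lam = r + ε' from by rw [hlamdef]; ring]
          _ < g t + ((-lam : ℝ) : EReal) := EReal.add_lt_add_right_coe hgt _
      have h2 : h μ < h t := lt_of_le_of_lt (hμs.trans hfs.le) h1
      rw [h'] at h2
      exact absurd h2 (lt_irrefl _)
  -- bounds on m
  have hφμ_abs : |φ μ| ≤ |lam| := by
    have h1 : |s - μ| ≤ t - s := by
      rw [abs_sub_comm, abs_le]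
      constructor <;> [linarith [hμmem.1]; linarith [hμmem.2]]
    rw [hφdef]
    simp only
    rw [abs_div, abs_mul, abs_of_pos hts, div_le_iff₀ hts]
    nlinarith [abs_nonneg lam, abs_nonneg (s - μ)]
  have hmub : m < r + ε := by
    have h1 : ((m + φ μ : ℝ) : EReal) < ((r + ε' : ℝ) : EReal) := by
      calc ((m + φ μ : ℝ) : EReal) = h μ := by simp only [hhdef, hm, EReal.coe_add]
        _ ≤ g s := hμs
        _ < _ := hfs
    have h2 := EReal.coe_lt_coe_iff.1 h1
    have h3 : ε' ≤ ε / 4 := min_le_left _ _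
    have h4 := abs_le.1 hφμ_abs
    have h5 := abs_le.1 hlam_abs
    nlinarith
  have hmlb : r - ε < m := by
    have h1 : dist (xbar + μ • u) xbar < δ₀ := by
      rw [dist_eq_norm]
      simp only [add_sub_cancel_left]
      rw [norm_smul, Real.norm_eq_abs, abs_of_pos (hs0.trans_le hμmem.1)]
      calc μ * ‖u‖ ≤ t * (‖u‖ + 1) := by nlinarith [norm_nonneg u, hμmem.2, hs0.trans_le hμmem.1]
        _ < δ₀ := htδ
    have := hδ₀ h1
    rw [show f (xbar + μ • u) = g μ from rfl, hm] at this
    exact EReal.coe_lt_coe_iff.1 this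
  -- the radial lower bound
  have hrad : (c : EReal) ≤ radial f (xbar + μ • u) u := by
    rw [radial]
    apply Filter.le_liminf_of_le (by isBoundedDefault)
    have hmem3 : ∀ᶠ τ in 𝓝[>] (0:ℝ), τ ∈ Ioo 0 (t - μ) :=
      eventually_of_mem (Ioo_mem_nhdsGT_of_mem ⟨le_refl (0:ℝ), sub_pos.2 hμt⟩) (fun _ h => h)
    filter_upwards [hmem3] with τ hτ
    have hτ0 : 0 < τ := hτ.1
    have hpt : xbar + μ • u + τ • u = xbar + (μ + τ) • u := by
      rw [add_smul]; abel
    rw [hpt]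
    have hfμ : f (xbar + μ • u) = (m : EReal) := hm
    rw [hfμ]
    have hin : μ + τ ∈ Icc s t := ⟨by linarith [hμmem.1], by linarith [hτ.2]⟩
    have hmin2 : h μ ≤ h (μ + τ) := hμmin _ hin
    rcases eq_or_ne (f (xbar + (μ + τ) • u)) ⊤ with hA | hA
    · rw [hA, EReal.top_sub_coe, EReal.mul_top_of_pos]
      · exact le_top
      · exact_mod_cast inv_pos.2 hτ0
    · set a : ℝ := (f (xbar + (μ + τ) • u)).toReal with hadef
      have hA' : f (xbar + (μ + τ) • u) = ((a : ℝ) : EReal) := (EReal.coe_toReal hA (hbot _)).symm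
      rw [hA']
      have hgA : g (μ + τ) = ((a : ℝ) : EReal) := hA' 
      have h1 : ((m + φ μ : ℝ) : EReal) ≤ ((a + φ (μ + τ) : ℝ) : EReal) := by
        calc ((m + φ μ : ℝ) : EReal) = h μ := by simp only [hhdef, hm, EReal.coe_add]
          _ ≤ h (μ + τ) := hmin2
          _ = _ := by simp only [hhdef, hgA, EReal.coe_add]
      have h2 : m + φ μ ≤ a + φ (μ + τ) := EReal.coe_le_coe_iff.1 h1
      have h3 : φ (μ + τ) = φ μ - lam * τ / (t - s) := by
        simp only [hφdef]; ring
      have h4 : lam * τ / (t - s) ≤ a - m := by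
        rw [h3] at h2; linarith
      have h5 : c * τ ≤ lam * τ / (t - s) := by
        rw [le_div_iff₀ hts]
        nlinarith
      rw [show ((a:ℝ) : EReal) - ((m:ℝ) : EReal) = ((a - m : ℝ) : EReal) from
        (EReal.coe_sub a m).symm, ← EReal.coe_mul]
      apply EReal.coe_le_coe_iff.2
      rw [inv_mul_eq_div, le_div_iff₀ hτ0]
      linarith
  refine ⟨μ, hs0.trans_le hμmem.1, lt_of_le_of_lt hμmem.2 htε, ?_, ?_, hrad⟩
  · show ((r - ε : ℝ) : EReal) ≤ g μ
    rw [hm]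
    exact_mod_cast hmlb.le
  · show g μ ≤ ((r + ε : ℝ) : EReal)
    rw [hm]
    exact_mod_cast hmub.le

lemma key_step0 {X : Type*} [NormedAddCommGroup X] [NormedSpace ℝ X]
    (f : X → EReal) (hf : LowerSemicontinuous f) (hbot : ∀ y, f y ≠ ⊥)
    (xbar u : X) {r : ℝ} (hr : f xbar = (r : EReal))
    (hacc : Filter.liminf (fun t : ℝ => f (xbar + t • u)) (𝓝[>] (0:ℝ)) = f xbar)
    {ε : ℝ} (hε : 0 < ε) :
    ∃ μ : ℝ, 0 < μ ∧ μ < ε ∧ ((r - ε : ℝ) : EReal) ≤ f (xbar + μ • u) ∧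
      f (xbar + μ • u) ≤ ((r + ε : ℝ) : EReal) := by
  have hlsc0 : ∀ᶠ y in 𝓝 xbar, ((r - ε : ℝ) : EReal) < f y := by
    apply hf xbar
    rw [hr]
    exact_mod_cast sub_lt_self r hε
  obtain ⟨δ₀, hδ₀pos, hδ₀⟩ := Metric.eventually_nhds_iff.1 hlsc0
  set S0 : ℝ := min ε (δ₀ / (‖u‖ + 1)) with hS0def
  have hS0pos : 0 < S0 := lt_min hε (by positivity)
  have hfreq2 : ∃ᶠ s in 𝓝[>] (0:ℝ), f (xbar + s • u) < ((r + ε : ℝ) : EReal) := by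
    apply frequently_lt_of_liminf_lt (by isBoundedDefault)
    rw [hacc, hr]
    exact_mod_cast lt_add_of_pos_right r hε
  have hmem2 : ∀ᶠ s in 𝓝[>] (0:ℝ), s ∈ Ioo 0 S0 :=
    eventually_of_mem (Ioo_mem_nhdsGT_of_mem ⟨le_refl (0:ℝ), hS0pos⟩) (fun _ h => h)
  obtain ⟨s, hfs, hs0, hsS0⟩ := (hfreq2.and_eventually hmem2).exists
  have hsε : s < ε := hsS0.trans_le (min_le_left _ _)
  refine ⟨s, hs0, hsε, ?_, hfs.le⟩
  apply le_of_lt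
  apply hδ₀
  rw [dist_eq_norm]
  simp only [add_sub_cancel_left]
  rw [norm_smul, Real.norm_eq_abs, abs_of_pos hs0]
  have h1 : s < δ₀ / (‖u‖ + 1) := hsS0.trans_le (min_le_right _ _)
  have h2 : (0:ℝ) < ‖u‖ + 1 := by positivity
  nlinarith [(lt_div_iff₀ h2).1 h1, norm_nonneg u]

theorem radial_stability_of_upper_radial {X : Type*} [NormedAddCommGroup X] [NormedSpace ℝ X]
    (f : X → EReal) (hf : LowerSemicontinuous f) (hbot : ∀ y, f y ≠ ⊥)
    (xbar : X) (hxbar : f xbar ≠ ⊤) (u : X)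
    (hacc : Filter.liminf (fun t : ℝ => f (xbar + t • u)) (𝓝[>] (0:ℝ)) = f xbar) :
    ∃ μ : ℕ → ℝ, (∀ n, 0 < μ n) ∧ Filter.Tendsto μ Filter.atTop (𝓝 (0:ℝ)) ∧
      Filter.Tendsto (fun n => f (xbar + μ n • u)) Filter.atTop (𝓝 (f xbar)) ∧
      radialPlus f xbar u ≤
        Filter.liminf (fun n => radial f (xbar + μ n • u) u) Filter.atTop := by
  set r : ℝ := (f xbar).toReal with hrdef
  have hr : f xbar = (r : EReal) := (EReal.coe_toReal hxbar (hbot _)).symm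
  set L : EReal := radialPlus f xbar u with hLdef
  have hεn : ∀ n : ℕ, (0:ℝ) < 1 / (n + 1) := fun n => by positivity
  obtain ⟨b, hb, hbk⟩ : ∃ b : ℕ → EReal, L ≤ liminf b atTop ∧
      ∀ n, b n = ⊥ ∨ ∃ x : ℝ, b n = (x : EReal) ∧ (x : EReal) < L := by
    rcases eq_bot_or_bot_lt L with hLbot | hLbot
    · exact ⟨fun _ => ⊥, by rw [hLbot]; exact bot_le, fun n => Or.inl rfl⟩
    rcases eq_top_or_lt_top L with hLtop | hLtop
    · refine ⟨fun n => ((n : ℝ) : EReal), ?_, fun n => Or.inr ⟨n, rfl, hLtop ▸ EReal.coe_lt_top _⟩⟩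
      have htend : Tendsto (fun n : ℕ => ((n : ℝ) : EReal)) atTop (𝓝 ⊤) := by
        rw [EReal.tendsto_nhds_top_iff_real]
        intro x
        obtain ⟨N, hN⟩ := exists_nat_gt x
        filter_upwards [eventually_ge_atTop N] with n hn
        exact_mod_cast hN.trans_le (by exact_mod_cast hn)
      rw [htend.liminf_eq, hLtop]
    · set l : ℝ := L.toReal with hldef
      have hl : L = (l : EReal) := (EReal.coe_toReal hLtop.ne (ne_of_gt hLbot)).symm
      refine ⟨fun n => ((l - 1 / (n + 1) : ℝ) : EReal), ?_, fun n => Or.inr ⟨_, rfl, ?_⟩⟩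
      · have htend : Tendsto (fun n : ℕ => ((l - 1 / (n + 1) : ℝ) : EReal)) atTop (𝓝 ((l:ℝ) : EReal)) := by
          rw [EReal.tendsto_coe]
          simpa using (tendsto_const_nhds (x := l)).sub tendsto_one_div_add_atTop_nhds_zero_nat
        rw [htend.liminf_eq, hl]
      · rw [hl]
        exact_mod_cast sub_lt_self l (hεn n)
  have hchoice : ∀ n : ℕ, ∃ μ : ℝ, 0 < μ ∧ μ < 1 / (n + 1) ∧
      ((r - 1 / (n + 1) : ℝ) : EReal) ≤ f (xbar + μ • u) ∧
      f (xbar + μ • u) ≤ ((r + 1 / (n + 1) : ℝ) : EReal) ∧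
      b n ≤ radial f (xbar + μ • u) u := by
    intro n
    rcases hbk n with hbn | ⟨x, hbn, hxL⟩
    · obtain ⟨μ, h1, h2, h3, h4⟩ := key_step0 f hf hbot xbar u hr hacc (hεn n)
      exact ⟨μ, h1, h2, h3, h4, hbn ▸ bot_le⟩
    · obtain ⟨μ, h1, h2, h3, h4, h5⟩ := key_step f hf hbot xbar u hr hacc x hxL (hεn n)
      exact ⟨μ, h1, h2, h3, h4, hbn ▸ h5⟩
  choose μ h1 h2 h3 h4 h5 using hchoice
  refine ⟨μ, h1, ?_, ?_, ?_⟩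
  · exact squeeze_zero (fun n => (h1 n).le) (fun n => (h2 n).le)
      tendsto_one_div_add_atTop_nhds_zero_nat
  · rw [hr]
    apply tendsto_of_tendsto_of_tendsto_of_le_of_le
      (g := fun n : ℕ => ((r - 1 / (n + 1) : ℝ) : EReal))
      (h := fun n : ℕ => ((r + 1 / (n + 1) : ℝ) : EReal))
    · rw [EReal.tendsto_coe]
      simpa using (tendsto_const_nhds (x := r)).sub tendsto_one_div_add_atTop_nhds_zero_nat
    · rw [EReal.tendsto_coe]
      simpa using (tendsto_const_nhds (x := r)).add tendsto_one_div_add_atTop_nhds_zero_nat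
    · exact h3
    · exact h4
  · calc L ≤ liminf b atTop := hb
      _ ≤ _ := liminf_le_liminf (Eventually.of_forall h5)
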